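/- Let d be a positive integer, τ ∈ (0,1/2) and s > 0, and write Q = [0,1]^d. Suppose that whenever F₊ and F₋ are disjoint subsets of Q, each a finite union of dyadic cubes contained in Q, satisfying min{λ(F₊), λ(F₋)} > τ·λ(Q \ F₊ \ F₋), there exists a cube W contained in Q with min{λ(W ∩ F₊), λ(W ∩ F₋)} ≥ s·λ(W). Then (τ,s) is a John–Strömberg pair for the collection of all cubes in ℝ^d. -/

import Mathlib

open MeasureTheory Set

/-- A closed axis-parallel cube in `ℝ^d` with positive side length. -/
def IsCube {d : ℕ} (Q : Set (Fin d → ℝ)) : Prop :=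
  ∃ (a : Fin d → ℝ) (r : ℝ), 0 < r ∧ Q = Set.univ.pi fun i => Set.Icc (a i) (a i + r)

/-- A dyadic cube in `ℝ^d`: `∏_i [kᵢ·2^{−n}, (kᵢ+1)·2^{−n}]` with `n ∈ ℤ`, `kᵢ ∈ ℤ`. -/
def IsDyadicCube {d : ℕ} (Q : Set (Fin d → ℝ)) : Prop :=
  ∃ (n : ℤ) (k : Fin d → ℤ),
    Q = Set.univ.pi fun i =>
      Set.Icc ((k i : ℝ) * (2:ℝ) ^ (-n)) (((k i : ℝ) + 1) * (2:ℝ) ^ (-n))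

/-- `F` is a finite union of dyadic cubes contained in `Q`. -/
def FiniteUnionOfDyadicCubesIn {d : ℕ} (F Q : Set (Fin d → ℝ)) : Prop :=
  ∃ 𝒮 : Set (Set (Fin d → ℝ)), 𝒮.Finite ∧ (∀ C ∈ 𝒮, IsDyadicCube C ∧ C ⊆ Q) ∧ F = ⋃₀ 𝒮

/-- `(τ,s)` is a John–Strömberg pair for the collection `𝓔`. -/
def IsJSPair {X : Type*} [MeasurableSpace X] (μ : Measure X)
    (𝓔 : Set (Set X)) (τ s : ℝ) : Prop :=
  0 < τ ∧ 0 < s ∧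
  ∀ Q ∈ 𝓔, ∀ Ep Em G : Set X,
    MeasurableSet Ep → MeasurableSet Em → MeasurableSet G →
    Disjoint Ep Em → Disjoint Ep G → Disjoint Em G →
    Q = Ep ∪ Em ∪ G →
    ENNReal.ofReal τ * μ G < min (μ Ep) (μ Em) →
    ∃ W ∈ 𝓔, W ⊆ Q ∧ ENNReal.ofReal s * μ W ≤ min (μ (W ∩ Ep)) (μ (W ∩ Em))

open Filter Topology ENNReal Metric

lemma volCube {d : ℕ} (b : Fin d → ℝ) (ρ : ℝ) :
    volume (Set.univ.pi fun i => Icc (b i) (b i + ρ)) = ENNReal.ofReal ρ ^ d := by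
  rw [volume_pi_pi]
  simp [Real.volume_Icc]

lemma volQ0 {d : ℕ} : volume (Set.univ.pi fun _ : Fin d => Icc (0:ℝ) 1) = 1 := by
  rw [volume_pi_pi]
  simp [Real.volume_Icc]

lemma volImageAffine {d : ℕ} (a : Fin d → ℝ) (r : ℝ) (S : Set (Fin d → ℝ)) :
    volume ((fun x => a + r • x) '' S) = ENNReal.ofReal (|r| ^ d) * volume S := by
  have h1 : (fun x : Fin d → ℝ => a + r • x) = (fun y => a + y) ∘ (fun x : Fin d → ℝ => r • x) := by
    funext x; simp
  rw [h1, Set.image_comp]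
  have h2 : (fun y : Fin d → ℝ => a + y) '' ((fun x : Fin d → ℝ => r • x) '' S)
      = (fun y : Fin d → ℝ => -a + y) ⁻¹' ((fun x : Fin d → ℝ => r • x) '' S) := by
    ext y; simp [Set.mem_image, neg_add_eq_sub, eq_comm, sub_eq_iff_eq_add']
  rw [h2, measure_preimage_add]
  have h3 : (fun x : Fin d → ℝ => r • x) = fun x => AffineMap.homothety (0 : Fin d → ℝ) r x := by
    funext x; simp [AffineMap.homothety_apply]
  rw [h3]
  have := Measure.addHaar_image_homothety (volume : Measure (Fin d → ℝ)) 0 r S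
  rw [Module.finrank_fin_fun] at this
  rw [show (⇑(AffineMap.homothety (0 : Fin d → ℝ) r) '' S) = ((fun x => AffineMap.homothety (0 : Fin d → ℝ) r x) '' S) from rfl] at this
  rw [this, abs_pow]

lemma dyadicCover {d : ℕ} {K : Set (Fin d → ℝ)}
    (hK : K ⊆ Set.univ.pi fun _ : Fin d => Icc (0:ℝ) 1) (n : ℕ) :
    ∃ 𝒮 : Set (Set (Fin d → ℝ)), 𝒮.Finite ∧ (∀ C ∈ 𝒮, IsDyadicCube C) ∧
      K ⊆ ⋃₀ 𝒮 ∧ ⋃₀ 𝒮 ⊆ cthickening ((2:ℝ) ^ (-(n:ℤ))) K := by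
  set t : ℝ := (2:ℝ) ^ (-(n:ℤ)) with ht_def
  have ht : 0 < t := by positivity
  set dyC : (Fin d → ℤ) → Set (Fin d → ℝ) := fun k =>
    Set.univ.pi fun i => Icc ((k i : ℝ) * t) (((k i : ℝ) + 1) * t) with hdyC
  refine ⟨dyC '' {k | (dyC k ∩ K).Nonempty}, ?_, ?_, ?_, ?_⟩
  · apply Set.Finite.image
    have hsub : {k : Fin d → ℤ | (dyC k ∩ K).Nonempty} ⊆
        Set.univ.pi fun _ : Fin d => Set.Icc (-1 : ℤ) (2 ^ n) := by
      rintro k ⟨x, hxC, hxK⟩ i _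
      have hxi : x i ∈ Icc ((k i : ℝ) * t) (((k i : ℝ) + 1) * t) := hxC i (mem_univ i)
      have hxq : x i ∈ Icc (0:ℝ) 1 := hK hxK i (mem_univ i)
      constructor
      · -- -1 ≤ k i
        have h0 : (0:ℝ) ≤ ((k i : ℝ) + 1) * t := le_trans hxq.1 hxi.2
        have : (0:ℝ) ≤ (k i : ℝ) + 1 := nonneg_of_mul_nonneg_left h0 ht
        have : (-1 : ℝ) ≤ (k i : ℝ) := by linarith
        exact_mod_cast this
      · -- k i ≤ 2^n
        have h1 : (k i : ℝ) * t ≤ 1 := le_trans hxi.1 hxq.2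
        have h2 : (1:ℝ) = (2:ℝ) ^ n * t := by
          rw [ht_def]
          rw [← zpow_natCast (2:ℝ) n, ← zpow_add₀ (by norm_num : (2:ℝ) ≠ 0)]
          simp
        have h3 : (k i : ℝ) ≤ (2:ℝ) ^ n := by
          have := (mul_le_mul_iff_of_pos_right ht).mp (h2 ▸ h1)
          exact this
        exact_mod_cast h3
    exact (Set.Finite.pi fun _ => Set.finite_Icc _ _).subset hsub
  · rintro C ⟨k, -, rfl⟩
    exact ⟨(n : ℤ), k, rfl⟩
  · intro x hx
    refine ⟨dyC fun i => ⌊x i / t⌋, ⟨_, ⟨⟨x, ?_, hx⟩, rfl⟩⟩, ?_⟩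
    · intro i _
      constructor
      · exact (le_div_iff₀ ht).mp (Int.floor_le _)
      · exact le_of_lt ((div_lt_iff₀ ht).mp (Int.lt_floor_add_one _))
    · intro i _
      constructor
      · exact (le_div_iff₀ ht).mp (Int.floor_le _)
      · exact le_of_lt ((div_lt_iff₀ ht).mp (Int.lt_floor_add_one _))
  · rintro x ⟨C, ⟨k, hk, rfl⟩, hxC⟩
    obtain ⟨y, hyC, hyK⟩ := hk
    apply mem_cthickening_of_dist_le x y t K hyK
    rw [dist_pi_le_iff ht.le]
    intro i
    have h1 := hxC i (mem_univ i)
    have h2 := hyC i (mem_univ i)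
    calc dist (x i) (y i) ≤ ((k i : ℝ) + 1) * t - (k i : ℝ) * t :=
          Real.dist_le_of_mem_Icc h1 h2
      _ = t := by ring

lemma affineInv {d : ℕ} (a : Fin d → ℝ) {r : ℝ} (hr : 0 < r) :
    Function.LeftInverse (fun y : Fin d → ℝ => fun i => (y i - a i) / r)
      (fun x : Fin d → ℝ => a + r • x) ∧
    Function.RightInverse (fun y : Fin d → ℝ => fun i => (y i - a i) / r)
      (fun x : Fin d → ℝ => a + r • x) := by
  constructor
  · intro x; funext i
    simp only [Pi.add_apply, Pi.smul_apply, smul_eq_mul]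
    field_simp
    ring
  · intro y; funext i
    simp only [Pi.add_apply, Pi.smul_apply, smul_eq_mul]
    field_simp
    ring

lemma imageAffineCube {d : ℕ} (a : Fin d → ℝ) {r : ℝ} (hr : 0 < r) (b : Fin d → ℝ) (ρ : ℝ) :
    (fun x : Fin d → ℝ => a + r • x) '' (Set.univ.pi fun i => Icc (b i) (b i + ρ))
      = Set.univ.pi fun i => Icc (a i + r * b i) ((a i + r * b i) + r * ρ) := by
  obtain ⟨hli, hri⟩ := affineInv a hr
  rw [Set.image_eq_preimage_of_inverse hli hri]
  ext x
  simp only [Set.mem_preimage, Set.mem_pi, Set.mem_univ, forall_true_left, Set.mem_Icc,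
    true_implies]
  refine forall_congr' fun i => ?_
  rw [le_div_iff₀ hr, div_le_iff₀ hr]
  constructor
  · rintro ⟨h1, h2⟩; constructor <;> nlinarith
  · rintro ⟨h1, h2⟩; constructor <;> nlinarith

lemma preimageAffineQ {d : ℕ} (a : Fin d → ℝ) {r : ℝ} (hr : 0 < r) :
    (fun x : Fin d → ℝ => a + r • x) ⁻¹' (Set.univ.pi fun i => Icc (a i) (a i + r))
      = Set.univ.pi fun _ => Icc (0:ℝ) 1 := by
  ext x
  simp only [Set.mem_preimage, Set.mem_pi, Set.mem_univ, forall_true_left, Set.mem_Icc,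
    Pi.add_apply, Pi.smul_apply, smul_eq_mul, true_implies]
  refine forall_congr' fun i => ?_
  constructor
  · rintro ⟨h1, h2⟩; constructor <;> nlinarith
  · rintro ⟨h1, h2⟩; constructor <;> nlinarith

lemma unitMain {d : ℕ} (hd : 0 < d) {τ s : ℝ}
    (hτ : τ ∈ Set.Ioo (0:ℝ) (1/2)) (hs : 0 < s)
    (hyp : ∀ Fp Fm : Set (Fin d → ℝ), Disjoint Fp Fm →
      FiniteUnionOfDyadicCubesIn Fp (Set.univ.pi fun _ : Fin d => Set.Icc (0:ℝ) 1) →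
      FiniteUnionOfDyadicCubesIn Fm (Set.univ.pi fun _ : Fin d => Set.Icc (0:ℝ) 1) →
      ENNReal.ofReal τ *
          volume (((Set.univ.pi fun _ : Fin d => Set.Icc (0:ℝ) 1) \ Fp) \ Fm) <
        min (volume Fp) (volume Fm) →
      ∃ W : Set (Fin d → ℝ), IsCube W ∧
        W ⊆ (Set.univ.pi fun _ : Fin d => Set.Icc (0:ℝ) 1) ∧
        ENNReal.ofReal s * volume W ≤ min (volume (W ∩ Fp)) (volume (W ∩ Fm)))
    (Ep Em G : Set (Fin d → ℝ)) (mEp : MeasurableSet Ep) (mEm : MeasurableSet Em)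
    (dpm : Disjoint Ep Em)
    (hunion : (Set.univ.pi fun _ : Fin d => Set.Icc (0:ℝ) 1) = Ep ∪ Em ∪ G)
    (hlt : ENNReal.ofReal τ * volume G < min (volume Ep) (volume Em)) :
    ∃ W : Set (Fin d → ℝ), IsCube W ∧
      W ⊆ (Set.univ.pi fun _ : Fin d => Set.Icc (0:ℝ) 1) ∧
      ENNReal.ofReal s * volume W ≤ min (volume (W ∩ Ep)) (volume (W ∩ Em)) := by
  set Q₀ : Set (Fin d → ℝ) := Set.univ.pi fun _ : Fin d => Set.Icc (0:ℝ) 1 with hQ₀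
  -- basic facts
  have hEpQ : Ep ⊆ Q₀ := by rw [hunion]; exact (subset_union_left).trans subset_union_left
  have hEmQ : Em ⊆ Q₀ := by rw [hunion]; exact (subset_union_right).trans subset_union_left
  have hvolQ0 : volume Q₀ = 1 := volQ0
  have hfinQ : volume Q₀ ≠ ⊤ := by rw [hvolQ0]; exact ENNReal.one_ne_top
  have hEpfin : volume Ep ≠ ⊤ := fun h => hfinQ (top_le_iff.mp (h ▸ measure_mono hEpQ))
  have hEmfin : volume Em ≠ ⊤ := fun h => hfinQ (top_le_iff.mp (h ▸ measure_mono hEmQ))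
  set m0 : ℝ≥0∞ := min (volume Ep) (volume Em) with hm0
  have hm0fin : m0 ≠ ⊤ := by
    simp only [hm0, ne_eq, min_eq_top, not_and]
    intro h; exact absurd h hEpfin
  set η : ℝ≥0∞ := m0 - ENNReal.ofReal τ * volume G with hη
  have hη0 : η ≠ 0 := (tsub_pos_of_lt hlt).ne'
  have hηfin : η ≠ ⊤ := fun h => hm0fin (top_le_iff.mp (h ▸ tsub_le_self))
  set ε : ℝ≥0∞ := η / 4 with hε
  have hε0 : ε ≠ 0 := by
    simp only [hε, ne_eq, ENNReal.div_eq_zero_iff, not_or]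
    exact ⟨hη0, by norm_num⟩
  have hεfin : ε ≠ ⊤ := by
    rw [hε]
    exact (ENNReal.div_lt_top hηfin (by norm_num)).ne
  have hε4 : ε + ε + ε + ε = η := by
    have h4 : (4 : ℝ≥0∞) * (η / 4) = η := ENNReal.mul_div_cancel' (by norm_num) (by norm_num)
    calc ε + ε + ε + ε = 4 * (η / 4) := by rw [hε]; ring
      _ = η := h4
  -- inner open cube
  set U : Set (Fin d → ℝ) := Set.univ.pi fun _ : Fin d => Ioo (0:ℝ) 1 with hU
  have hUopen : IsOpen U := isOpen_set_pi finite_univ fun i _ => isOpen_Ioo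
  have hUmeas : MeasurableSet U := MeasurableSet.univ_pi fun i => measurableSet_Ioo
  have hUQ : U ⊆ Q₀ := Set.pi_mono fun i _ => Ioo_subset_Icc_self
  have hvolU : volume U = 1 := by rw [hU, volume_pi_pi]; simp [Real.volume_Ioo]
  have hnull : volume (Q₀ \ U) = 0 := by
    rw [measure_diff hUQ hUmeas.nullMeasurableSet (by rw [hvolU]; exact ENNReal.one_ne_top),
      hvolU, hvolQ0, tsub_self]
  -- compact approximations
  have hEpUfin : volume (Ep ∩ U) ≠ ⊤ :=
    fun h => hEpfin (top_le_iff.mp (h ▸ measure_mono inter_subset_left))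
  have hEmUfin : volume (Em ∩ U) ≠ ⊤ :=
    fun h => hEmfin (top_le_iff.mp (h ▸ measure_mono inter_subset_left))
  obtain ⟨Kp, hKpsub, hKpc, hKpd⟩ := (mEp.inter hUmeas).exists_isCompact_diff_lt hEpUfin hε0
  obtain ⟨Km, hKmsub, hKmc, hKmd⟩ := (mEm.inter hUmeas).exists_isCompact_diff_lt hEmUfin hε0
  have hKpEp : Kp ⊆ Ep := hKpsub.trans inter_subset_left
  have hKmEm : Km ⊆ Em := hKmsub.trans inter_subset_left
  have hKpU : Kp ⊆ U := hKpsub.trans inter_subset_right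
  have hKmU : Km ⊆ U := hKmsub.trans inter_subset_right
  have hEpKp : volume (Ep \ Kp) ≤ ε := by
    have hsub : Ep \ Kp ⊆ ((Ep ∩ U) \ Kp) ∪ (Q₀ \ U) := by
      intro x hx
      by_cases hxU : x ∈ U
      · exact Or.inl ⟨⟨hx.1, hxU⟩, hx.2⟩
      · exact Or.inr ⟨hEpQ hx.1, hxU⟩
    calc volume (Ep \ Kp) ≤ volume ((Ep ∩ U) \ Kp) + volume (Q₀ \ U) :=
          (measure_mono hsub).trans (measure_union_le _ _)
      _ ≤ ε + 0 := add_le_add hKpd.le hnull.le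
      _ = ε := add_zero ε
  have hEmKm : volume (Em \ Km) ≤ ε := by
    have hsub : Em \ Km ⊆ ((Em ∩ U) \ Km) ∪ (Q₀ \ U) := by
      intro x hx
      by_cases hxU : x ∈ U
      · exact Or.inl ⟨⟨hx.1, hxU⟩, hx.2⟩
      · exact Or.inr ⟨hEmQ hx.1, hxU⟩
    calc volume (Em \ Km) ≤ volume ((Em ∩ U) \ Km) + volume (Q₀ \ U) :=
          (measure_mono hsub).trans (measure_union_le _ _)
      _ ≤ ε + 0 := add_le_add hKmd.le hnull.le
      _ = ε := add_zero ε
  have hKpm : MeasurableSet Kp := hKpc.isClosed.measurableSet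
  have hKmm : MeasurableSet Km := hKmc.isClosed.measurableSet
  have hKpfin : volume Kp ≠ ⊤ :=
    fun h => hEpfin (top_le_iff.mp (h ▸ measure_mono hKpEp))
  have hKmfin : volume Km ≠ ⊤ :=
    fun h => hEmfin (top_le_iff.mp (h ▸ measure_mono hKmEm))
  -- separation and containment radii
  have hdisjK : Disjoint Kp Km := dpm.mono hKpEp hKmEm
  obtain ⟨δ, hδ0, hδdisj⟩ := hdisjK.exists_cthickenings hKpc hKmc.isClosed
  obtain ⟨t₁, ht₁0, ht₁⟩ := hKpc.exists_cthickening_subset_open hUopen hKpU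
  obtain ⟨t₂, ht₂0, ht₂⟩ := hKmc.exists_cthickening_subset_open hUopen hKmU
  -- choice of dyadic scales
  have hscale : ∀ k : ℕ, ∃ n : ℕ, (2:ℝ) ^ (-(n:ℤ)) ≤ δ/2 ∧ (2:ℝ) ^ (-(n:ℤ)) ≤ t₁ ∧
      (2:ℝ) ^ (-(n:ℤ)) ≤ t₂ ∧
      volume (cthickening ((2:ℝ) ^ (-(n:ℤ))) Kp) ≤ volume Kp + (2⁻¹:ℝ≥0∞)^k ∧
      volume (cthickening ((2:ℝ) ^ (-(n:ℤ))) Km) ≤ volume Km + (2⁻¹:ℝ≥0∞)^k := by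
    intro k
    have heq : ∀ n : ℕ, ((1:ℝ)/2) ^ n = (2:ℝ) ^ (-(n:ℤ)) := fun n => by
      rw [zpow_neg, zpow_natCast, one_div, inv_pow]
    have hseq : Tendsto (fun n : ℕ => (2:ℝ) ^ (-(n:ℤ))) atTop (𝓝 0) :=
      (tendsto_pow_atTop_nhds_zero_of_lt_one (by norm_num : (0:ℝ) ≤ 1/2)
        (by norm_num)).congr heq
    have hpowne : ((2⁻¹:ℝ≥0∞)^k) ≠ 0 := by
      apply pow_ne_zero
      simp
    have hKpT := (tendsto_measure_cthickening_of_isCompact (μ := volume) hKpc).comp hseq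
    have hKmT := (tendsto_measure_cthickening_of_isCompact (μ := volume) hKmc).comp hseq
    have e1 := hKpT.eventually_lt_const (ENNReal.lt_add_right hKpfin hpowne)
    have e2 := hKmT.eventually_lt_const (ENNReal.lt_add_right hKmfin hpowne)
    have e3 := hseq.eventually_lt_const (half_pos hδ0)
    have e4 := hseq.eventually_lt_const ht₁0
    have e5 := hseq.eventually_lt_const ht₂0
    obtain ⟨n, h1, h2, h3, h4, h5⟩ := (e3.and (e4.and (e5.and (e1.and e2)))).exists
    exact ⟨n, h1.le, h2.le, h3.le, h4.le, h5.le⟩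
  choose nk hn1 hn2 hn3 hn4 hn5 using hscale
  -- dyadic cube families
  have hKpQ : Kp ⊆ Q₀ := hKpU.trans hUQ
  have hKmQ : Km ⊆ Q₀ := hKmU.trans hUQ
  choose Sp hSpfin hSpdy hSpcov hSpsub using fun k => dyadicCover hKpQ (nk k)
  choose Sm hSmfin hSmdy hSmcov hSmsub using fun k => dyadicCover hKmQ (nk k)
  set Fp : ℕ → Set (Fin d → ℝ) := fun k => ⋃₀ Sp k with hFp
  set Fm : ℕ → Set (Fin d → ℝ) := fun k => ⋃₀ Sm k with hFm
  have hFpδ2 : ∀ k, Fp k ⊆ cthickening (δ/2) Kp :=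
    fun k => (hSpsub k).trans (cthickening_mono (hn1 k) _)
  have hFmδ2 : ∀ k, Fm k ⊆ cthickening (δ/2) Km :=
    fun k => (hSmsub k).trans (cthickening_mono (hn1 k) _)
  have hFpδ : ∀ k, Fp k ⊆ cthickening δ Kp :=
    fun k => (hFpδ2 k).trans (cthickening_mono (half_le_self hδ0.le) _)
  have hFmδ : ∀ k, Fm k ⊆ cthickening δ Km :=
    fun k => (hFmδ2 k).trans (cthickening_mono (half_le_self hδ0.le) _)
  have hFpU : ∀ k, Fp k ⊆ U := fun k => (hSpsub k).trans ((cthickening_mono (hn2 k) _).trans ht₁)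
  have hFmU : ∀ k, Fm k ⊆ U := fun k => (hSmsub k).trans ((cthickening_mono (hn3 k) _).trans ht₂)
  have hFUDp : ∀ k, FiniteUnionOfDyadicCubesIn (Fp k) Q₀ := fun k =>
    ⟨Sp k, hSpfin k, fun C hC => ⟨hSpdy k C hC,
      (subset_sUnion_of_mem hC).trans ((hFpU k).trans hUQ)⟩, rfl⟩
  have hFUDm : ∀ k, FiniteUnionOfDyadicCubesIn (Fm k) Q₀ := fun k =>
    ⟨Sm k, hSmfin k, fun C hC => ⟨hSmdy k C hC,
      (subset_sUnion_of_mem hC).trans ((hFmU k).trans hUQ)⟩, rfl⟩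
  have hdisjF : ∀ k, Disjoint (Fp k) (Fm k) := fun k => hδdisj.mono (hFpδ k) (hFmδ k)
  -- excess measure
  have hexKp : ∀ k, volume (Fp k \ Kp) ≤ (2⁻¹:ℝ≥0∞)^k := by
    intro k
    have h1 : volume (Fp k \ Kp) ≤ volume (cthickening ((2:ℝ) ^ (-(nk k:ℤ))) Kp \ Kp) :=
      measure_mono (diff_subset_diff_left (hSpsub k))
    rw [measure_diff (self_subset_cthickening _) hKpm.nullMeasurableSet hKpfin] at h1
    exact h1.trans (tsub_le_iff_right.mpr ((hn4 k).trans (by rw [add_comm])))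
  have hexKm : ∀ k, volume (Fm k \ Km) ≤ (2⁻¹:ℝ≥0∞)^k := by
    intro k
    have h1 : volume (Fm k \ Km) ≤ volume (cthickening ((2:ℝ) ^ (-(nk k:ℤ))) Km \ Km) :=
      measure_mono (diff_subset_diff_left (hSmsub k))
    rw [measure_diff (self_subset_cthickening _) hKmm.nullMeasurableSet hKmfin] at h1
    exact h1.trans (tsub_le_iff_right.mpr ((hn5 k).trans (by rw [add_comm])))
  -- mass condition
  have hGQ : G ⊆ Q₀ := by rw [hunion]; exact subset_union_right
  have hGfin : volume G ≠ ⊤ := fun h => hfinQ (top_le_iff.mp (h ▸ measure_mono hGQ))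
  set A : ℝ≥0∞ := ENNReal.ofReal τ * volume G with hA
  have hAfin : A ≠ ⊤ := ENNReal.mul_ne_top ENNReal.ofReal_ne_top hGfin
  have hτ1 : ENNReal.ofReal τ ≤ 1 := ENNReal.ofReal_le_one.mpr (by linarith [hτ.2])
  have hKpbig : A + ε + ε + ε ≤ volume Kp := by
    have hEple : volume Ep ≤ volume Kp + ε := by
      calc volume Ep ≤ volume (Kp ∪ (Ep \ Kp)) := measure_mono fun x hx => by
            by_cases hK : x ∈ Kp
            · exact Or.inl hK
            · exact Or.inr ⟨hx, hK⟩
        _ ≤ volume Kp + volume (Ep \ Kp) := measure_union_le _ _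
        _ ≤ volume Kp + ε := add_le_add_right hEpKp _
    have hm0Ep : A + η ≤ volume Ep := by
      have hrec : η + A = m0 := by rw [hη]; exact tsub_add_cancel_of_le hlt.le
      calc A + η = η + A := add_comm _ _
        _ = m0 := hrec
        _ ≤ volume Ep := min_le_left _ _
    have hfull : (A + ε + ε + ε) + ε ≤ volume Kp + ε := by
      calc (A + ε + ε + ε) + ε = A + (ε + ε + ε + ε) := by ring
        _ = A + η := by rw [hε4]
        _ ≤ volume Ep := hm0Ep
        _ ≤ volume Kp + ε := hEple
    exact (ENNReal.add_le_add_iff_right hεfin).mp hfull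
  have hKmbig : A + ε + ε + ε ≤ volume Km := by
    have hEmle : volume Em ≤ volume Km + ε := by
      calc volume Em ≤ volume (Km ∪ (Em \ Km)) := measure_mono fun x hx => by
            by_cases hK : x ∈ Km
            · exact Or.inl hK
            · exact Or.inr ⟨hx, hK⟩
        _ ≤ volume Km + volume (Em \ Km) := measure_union_le _ _
        _ ≤ volume Km + ε := add_le_add_right hEmKm _
    have hm0Em : A + η ≤ volume Em := by
      have hrec : η + A = m0 := by rw [hη]; exact tsub_add_cancel_of_le hlt.le
      calc A + η = η + A := add_comm _ _
        _ = m0 := hrec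
        _ ≤ volume Em := min_le_right _ _
    have hfull : (A + ε + ε + ε) + ε ≤ volume Km + ε := by
      calc (A + ε + ε + ε) + ε = A + (ε + ε + ε + ε) := by ring
        _ = A + η := by rw [hε4]
        _ ≤ volume Em := hm0Em
        _ ≤ volume Km + ε := hEmle
    exact (ENNReal.add_le_add_iff_right hεfin).mp hfull
  have hmass : ∀ k, ENNReal.ofReal τ * volume ((Q₀ \ Fp k) \ Fm k) <
      min (volume (Fp k)) (volume (Fm k)) := by
    intro k
    have hsub : (Q₀ \ Fp k) \ Fm k ⊆ (Ep \ Kp) ∪ ((Em \ Km) ∪ G) := by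
      rintro x ⟨⟨hxQ, hxFp⟩, hxFm⟩
      rw [hunion] at hxQ
      rcases hxQ with (hEp | hEm) | hG
      · exact Or.inl ⟨hEp, fun hK => hxFp (hSpcov k hK)⟩
      · exact Or.inr (Or.inl ⟨hEm, fun hK => hxFm (hSmcov k hK)⟩)
      · exact Or.inr (Or.inr hG)
    have h1 : volume ((Q₀ \ Fp k) \ Fm k) ≤ volume G + (ε + ε) := by
      calc volume ((Q₀ \ Fp k) \ Fm k)
          ≤ volume (Ep \ Kp) + (volume (Em \ Km) + volume G) :=
            (measure_mono hsub).trans ((measure_union_le _ _).trans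
              (add_le_add_right (measure_union_le _ _) _))
        _ ≤ ε + (ε + volume G) := add_le_add hEpKp (add_le_add_left hEmKm _)
        _ = volume G + (ε + ε) := by ring
    calc ENNReal.ofReal τ * volume ((Q₀ \ Fp k) \ Fm k)
        ≤ ENNReal.ofReal τ * (volume G + (ε + ε)) := mul_le_mul_right h1 _
      _ = A + ENNReal.ofReal τ * (ε + ε) := by rw [mul_add]
      _ ≤ A + (ε + ε) := add_le_add_right (by
          calc ENNReal.ofReal τ * (ε + ε) ≤ 1 * (ε + ε) := mul_le_mul_left hτ1 _
            _ = ε + ε := one_mul _) _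
      _ < A + (ε + ε + ε) := ENNReal.add_lt_add_left hAfin
          (ENNReal.lt_add_right (ENNReal.add_ne_top.mpr ⟨hεfin, hεfin⟩) hε0)
      _ ≤ min (volume Kp) (volume Km) := le_min
          (le_trans (by rw [show A + (ε + ε + ε) = A + ε + ε + ε by ring]) hKpbig)
          (le_trans (by rw [show A + (ε + ε + ε) = A + ε + ε + ε by ring]) hKmbig)
      _ ≤ min (volume (Fp k)) (volume (Fm k)) :=
          min_le_min (measure_mono (hSpcov k)) (measure_mono (hSmcov k))
  -- apply the hypothesis for every k
  have hWex : ∀ k, ∃ W : Set (Fin d → ℝ), IsCube W ∧ W ⊆ Q₀ ∧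
      ENNReal.ofReal s * volume W ≤ min (volume (W ∩ Fp k)) (volume (W ∩ Fm k)) :=
    fun k => hyp (Fp k) (Fm k) (hdisjF k) (hFUDp k) (hFUDm k) (hmass k)
  choose W hWc hWQ hWineq using hWex
  choose b ρ hρ0 hWeq using hWc
  -- basic facts about the cubes W k
  have hvolW : ∀ k, volume (W k) = ENNReal.ofReal (ρ k) ^ d := fun k => by
    rw [hWeq k]; exact volCube _ _
  have hsne : ENNReal.ofReal s ≠ 0 := (ENNReal.ofReal_pos.mpr hs).ne'
  have hWvol0 : ∀ k, volume (W k) ≠ 0 := fun k => by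
    rw [hvolW k]; exact pow_ne_zero _ (ENNReal.ofReal_pos.mpr (hρ0 k)).ne'
  have hWFpne : ∀ k, (W k ∩ Fp k).Nonempty := by
    intro k
    apply nonempty_of_measure_ne_zero (μ := volume)
    have hpos : 0 < ENNReal.ofReal s * volume (W k) :=
      ENNReal.mul_pos hsne (hWvol0 k)
    exact (hpos.trans_le ((hWineq k).trans (min_le_left _ _))).ne'
  have hWFmne : ∀ k, (W k ∩ Fm k).Nonempty := by
    intro k
    apply nonempty_of_measure_ne_zero (μ := volume)
    have hpos : 0 < ENNReal.ofReal s * volume (W k) :=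
      ENNReal.mul_pos hsne (hWvol0 k)
    exact (hpos.trans_le ((hWineq k).trans (min_le_right _ _))).ne'
  -- lower bound on the side length
  have hρδ : ∀ k, δ/2 ≤ ρ k := by
    intro k
    obtain ⟨x, hxW, hxFp⟩ := hWFpne k
    obtain ⟨y, hyW, hyFm⟩ := hWFmne k
    have hxKp : x ∈ cthickening δ Kp := hFpδ k hxFp
    have hyKm : y ∈ cthickening (δ/2) Km := hFmδ2 k hyFm
    have hxnot : x ∉ cthickening δ Km := disjoint_left.mp hδdisj hxKp
    have hlt1 : ENNReal.ofReal δ < EMetric.infEdist x Km :=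
      not_le.mp fun h => hxnot (mem_cthickening_iff.mpr h)
    have h2 : EMetric.infEdist x Km ≤ edist x y + EMetric.infEdist y Km :=
      EMetric.infEdist_le_edist_add_infEdist
    have h3 : EMetric.infEdist y Km ≤ ENNReal.ofReal (δ/2) := mem_cthickening_iff.mp hyKm
    have hdxy : dist x y ≤ ρ k := by
      rw [hWeq k] at hxW hyW
      rw [dist_pi_le_iff (hρ0 k).le]
      intro i
      have h4 := hxW i (mem_univ i)
      have h5 := hyW i (mem_univ i)
      have := Real.dist_le_of_mem_Icc h4 h5
      simpa using this
    by_contra hcon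
    push_neg at hcon
    have hed : edist x y ≤ ENNReal.ofReal (δ/2) := by
      rw [edist_dist]
      exact ENNReal.ofReal_le_ofReal (hdxy.trans hcon.le)
    have hbad : ENNReal.ofReal δ < ENNReal.ofReal δ := by
      calc ENNReal.ofReal δ < edist x y + EMetric.infEdist y Km := hlt1.trans_le h2
        _ ≤ ENNReal.ofReal (δ/2) + ENNReal.ofReal (δ/2) := add_le_add hed h3
        _ = ENNReal.ofReal δ := by
            rw [← ENNReal.ofReal_add (by positivity) (by positivity), add_halves]
    exact absurd hbad (lt_irrefl _)
  -- membership of parameters in a compact set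
  have hbW : ∀ k, b k ∈ W k := by
    intro k; rw [hWeq k]; intro i _
    exact ⟨le_refl _, le_add_of_nonneg_right (hρ0 k).le⟩
  have hcW : ∀ k, (fun i => b k i + ρ k) ∈ W k := by
    intro k; rw [hWeq k]; intro i _
    exact ⟨le_add_of_nonneg_right (hρ0 k).le, le_refl _⟩
  have hbQ : ∀ k, b k ∈ Q₀ := fun k => hWQ k (hbW k)
  have hcQ : ∀ k, (fun i => b k i + ρ k) ∈ Q₀ := fun k => hWQ k (hcW k)
  have hρ1 : ∀ k, ρ k ≤ 1 := by
    intro k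
    have i0 : Fin d := ⟨0, hd⟩
    have h1 := (hcQ k) i0 (mem_univ i0)
    have h2 := (hbQ k) i0 (mem_univ i0)
    simp only [Set.mem_Icc] at h1 h2
    linarith [h1.2, h2.1]
  set T : Set ((Fin d → ℝ) × ℝ) :=
    (Set.univ.pi fun _ : Fin d => Icc (0:ℝ) 1) ×ˢ Icc (δ/2) 1 with hT
  have hTcomp : IsCompact T := (isCompact_univ_pi fun _ => isCompact_Icc).prod isCompact_Icc
  have hmemT : ∀ k, (b k, ρ k) ∈ T := fun k => ⟨hbQ k, ⟨hρδ k, hρ1 k⟩⟩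
  obtain ⟨pL, hTmem, φ, hφmono, hφtend⟩ := hTcomp.tendsto_subseq hmemT
  obtain ⟨bL, rL⟩ := pL
  have hrLδ : δ/2 ≤ rL := hTmem.2.1
  have hrLpos : 0 < rL := (half_pos hδ0).trans_le hrLδ
  have htb : Tendsto (fun k => b (φ k)) atTop (𝓝 bL) :=
    (continuous_fst.tendsto _).comp hφtend
  have htρ : Tendsto (fun k => ρ (φ k)) atTop (𝓝 rL) :=
    (continuous_snd.tendsto _).comp hφtend
  have hcorner : ∀ i, bL i + rL ≤ 1 := by
    intro i
    have h1 : Tendsto (fun k => b (φ k) i + ρ (φ k)) atTop (𝓝 (bL i + rL)) :=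
      (((continuous_apply i).tendsto _).comp htb).add htρ
    refine le_of_tendsto h1 (Eventually.of_forall fun k => ?_)
    have := (hcQ (φ k)) i (mem_univ i)
    simpa using this.2
  have hbLQ : ∀ i, bL i ∈ Icc (0:ℝ) 1 := fun i => hTmem.1 i (mem_univ i)
  -- the limit cube
  set WL : Set (Fin d → ℝ) := Set.univ.pi fun i => Icc (bL i) (bL i + rL) with hWLdef
  set c : ℕ → ℝ := fun j => (δ/2) / (j+1) with hcdef
  have hcpos : ∀ j, 0 < c j := fun j => div_pos (half_pos hδ0) (by positivity)
  have hcanti : Antitone c := by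
    intro j j' h
    have hj : (j:ℝ) + 1 ≤ (j':ℝ) + 1 := by exact_mod_cast Nat.succ_le_succ h
    exact div_le_div_of_nonneg_left (half_pos hδ0).le (by positivity) hj
  have hctend : Tendsto c atTop (𝓝 0) := by
    apply Tendsto.div_atTop tendsto_const_nhds
    exact tendsto_atTop_add_const_right atTop 1 tendsto_natCast_atTop_atTop
  set O : ℕ → Set (Fin d → ℝ) :=
    fun j => Set.univ.pi fun i => Icc (bL i - c j) (bL i + rL + c j) with hOdef
  have hOanti : Antitone O := by
    intro j j' h
    refine Set.pi_mono fun i _ => Icc_subset_Icc ?_ ?_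
    · have := hcanti h; linarith
    · have := hcanti h; linarith
  have hOclosed : ∀ j, IsClosed (O j) := fun j => isClosed_set_pi fun i _ => isClosed_Icc
  have hOint : (⋂ j, O j) = WL := by
    apply Subset.antisymm
    · intro x hx i _
      have hxj : ∀ j : ℕ, bL i - c j ≤ x i ∧ x i ≤ bL i + rL + c j :=
        fun j => (mem_iInter.mp hx j) i (mem_univ i)
      constructor
      · have ht1 : Tendsto (fun j => bL i - c j) atTop (𝓝 (bL i)) := by
          simpa using tendsto_const_nhds.sub hctend
        exact le_of_tendsto ht1 (Eventually.of_forall fun j => (hxj j).1)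
      · have ht2 : Tendsto (fun j => bL i + rL + c j) atTop (𝓝 (bL i + rL)) := by
          simpa using tendsto_const_nhds.add hctend
        exact ge_of_tendsto ht2 (Eventually.of_forall fun j => (hxj j).2)
    · intro x hx
      refine mem_iInter.mpr fun j i _ => ?_
      have h := hx i (mem_univ i)
      exact ⟨by linarith [h.1, hcpos j], by linarith [h.2, hcpos j]⟩
  -- key limit estimate
  have keylim : ∀ (K : Set (Fin d → ℝ)) (F : ℕ → Set (Fin d → ℝ)),
      IsCompact K → (∀ k, volume (F k \ K) ≤ (2⁻¹:ℝ≥0∞)^k) →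
      (∀ k, ENNReal.ofReal s * volume (W k) ≤ volume (W k ∩ F k)) →
      ENNReal.ofReal s * ENNReal.ofReal rL ^ d ≤ volume (WL ∩ K) := by
    intro K F hKc hKex hKineq
    have hKfin : volume K ≠ ⊤ := hKc.measure_lt_top.ne
    have hstep : ∀ j : ℕ,
        ENNReal.ofReal s * ENNReal.ofReal (rL - c j) ^ d ≤ volume (O j ∩ K) := by
      intro j
      apply ENNReal.le_of_forall_pos_le_add
      intro ϵ hϵ hlt2
      obtain ⟨k₀, hk₀⟩ := ENNReal.exists_inv_two_pow_lt
        (show ((ϵ:ℝ≥0∞)) ≠ 0 by exact_mod_cast hϵ.ne')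
      obtain ⟨N, hN⟩ := Metric.tendsto_atTop.mp hφtend (c j / 2) (half_pos (hcpos j))
      set k := max N k₀ with hkdef
      have hdist := hN k (le_max_left _ _)
      rw [Prod.dist_eq] at hdist
      have hd1 : dist (b (φ k)) bL < c j / 2 :=
        lt_of_le_of_lt (le_max_left _ _) hdist
      have hd2 : |ρ (φ k) - rL| < c j / 2 := by
        have := lt_of_le_of_lt (le_max_right _ _) hdist
        rwa [Real.dist_eq] at this
      rw [abs_sub_lt_iff] at hd2
      have hWsub : W (φ k) ⊆ O j := by
        rw [hWeq (φ k)]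
        intro x hx i _
        have hxi := hx i (mem_univ i)
        have hbi : |b (φ k) i - bL i| < c j / 2 := by
          have := lt_of_le_of_lt (dist_le_pi_dist (b (φ k)) bL i) hd1
          rwa [Real.dist_eq] at this
        rw [abs_sub_lt_iff] at hbi
        exact ⟨by linarith [hxi.1, hbi.1, hbi.2],
          by linarith [hxi.2, hbi.1, hbi.2, hd2.1, hd2.2]⟩
      have hρlow : rL - c j ≤ ρ (φ k) := by linarith [hd2.1, hd2.2, hcpos j]
      have hmono1 : ENNReal.ofReal (rL - c j) ^ d ≤ ENNReal.ofReal (ρ (φ k)) ^ d :=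
        pow_le_pow_left₀ zero_le (ENNReal.ofReal_le_ofReal hρlow) d
      have hφk : k₀ ≤ φ k := le_trans (le_max_right N k₀) hφmono.le_apply
      calc ENNReal.ofReal s * ENNReal.ofReal (rL - c j) ^ d
          ≤ ENNReal.ofReal s * volume (W (φ k)) := by
            rw [hvolW (φ k)]; exact mul_le_mul_right hmono1 _
        _ ≤ volume (W (φ k) ∩ F (φ k)) := hKineq (φ k)
        _ ≤ volume (W (φ k) ∩ K) + volume (F (φ k) \ K) := by
            refine (measure_mono ?_).trans (measure_union_le _ _)
            rintro x ⟨hxW, hxF⟩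
            by_cases hxK : x ∈ K
            · exact Or.inl ⟨hxW, hxK⟩
            · exact Or.inr ⟨hxF, hxK⟩
        _ ≤ volume (O j ∩ K) + (2⁻¹:ℝ≥0∞) ^ (φ k) :=
            add_le_add (measure_mono (inter_subset_inter_left _ hWsub)) (hKex (φ k))
        _ ≤ volume (O j ∩ K) + (2⁻¹:ℝ≥0∞) ^ k₀ :=
            add_le_add_right (pow_le_pow_of_le_one zero_le
              (ENNReal.inv_le_one.mpr one_le_two) hφk) _
        _ ≤ volume (O j ∩ K) + ϵ := add_le_add_right hk₀.le _
    have hBt : Tendsto (fun j => volume (O j ∩ K)) atTop (𝓝 (volume (WL ∩ K))) := by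
      have hmeas : ∀ j, NullMeasurableSet (O j ∩ K) volume := fun j =>
        ((hOclosed j).measurableSet.inter hKc.isClosed.measurableSet).nullMeasurableSet
      have hanti : Antitone (fun j => O j ∩ K) :=
        fun j j' h => inter_subset_inter_left _ (hOanti h)
      have hfin : ∃ j, volume (O j ∩ K) ≠ ⊤ :=
        ⟨0, fun h => hKfin (top_le_iff.mp (h ▸ measure_mono inter_subset_right))⟩
      have := tendsto_measure_iInter_atTop (μ := volume) hmeas hanti hfin
      rwa [show (⋂ j, O j ∩ K) = WL ∩ K by rw [← Set.iInter_inter, hOint]] at this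
    have hAt : Tendsto (fun j => ENNReal.ofReal s * ENNReal.ofReal (rL - c j) ^ d) atTop
        (𝓝 (ENNReal.ofReal s * ENNReal.ofReal rL ^ d)) := by
      have h1 : Tendsto (fun j => rL - c j) atTop (𝓝 rL) := by
        simpa using tendsto_const_nhds.sub hctend
      have h2 : Tendsto (fun j => ENNReal.ofReal (rL - c j)) atTop (𝓝 (ENNReal.ofReal rL)) :=
        (ENNReal.continuous_ofReal.tendsto _).comp h1
      exact ENNReal.Tendsto.const_mul (ENNReal.Tendsto.pow h2) (Or.inr ENNReal.ofReal_ne_top)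
    exact le_of_tendsto_of_tendsto' hAt hBt hstep
  have hkeyP : ENNReal.ofReal s * ENNReal.ofReal rL ^ d ≤ volume (WL ∩ Kp) :=
    keylim Kp Fp hKpc hexKp (fun k => (hWineq k).trans (min_le_left _ _))
  have hkeyM : ENNReal.ofReal s * ENNReal.ofReal rL ^ d ≤ volume (WL ∩ Km) :=
    keylim Km Fm hKmc hexKm (fun k => (hWineq k).trans (min_le_right _ _))
  refine ⟨WL, ⟨bL, rL, hrLpos, hWLdef⟩, ?_, ?_⟩
  · intro x hx i _
    have h := hx i (mem_univ i)
    exact ⟨le_trans (hbLQ i).1 h.1, le_trans h.2 (hcorner i)⟩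
  · rw [hWLdef, volCube bL rL]
    exact le_min (hkeyP.trans (measure_mono (inter_subset_inter_right _ hKpEp)))
      (hkeyM.trans (measure_mono (inter_subset_inter_right _ hKmEm)))

theorem stmt18 {d : ℕ} (hd : 0 < d) (τ s : ℝ)
    (hτ : τ ∈ Set.Ioo (0:ℝ) (1/2)) (hs : 0 < s)
    (hyp : ∀ Fp Fm : Set (Fin d → ℝ), Disjoint Fp Fm →
      FiniteUnionOfDyadicCubesIn Fp (Set.univ.pi fun _ : Fin d => Set.Icc (0:ℝ) 1) →
      FiniteUnionOfDyadicCubesIn Fm (Set.univ.pi fun _ : Fin d => Set.Icc (0:ℝ) 1) →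
      ENNReal.ofReal τ *
          volume (((Set.univ.pi fun _ : Fin d => Set.Icc (0:ℝ) 1) \ Fp) \ Fm) <
        min (volume Fp) (volume Fm) →
      ∃ W : Set (Fin d → ℝ), IsCube W ∧
        W ⊆ (Set.univ.pi fun _ : Fin d => Set.Icc (0:ℝ) 1) ∧
        ENNReal.ofReal s * volume W ≤ min (volume (W ∩ Fp)) (volume (W ∩ Fm))) :
    IsJSPair volume {C : Set (Fin d → ℝ) | IsCube C} τ s := by
  refine ⟨hτ.1, hs, ?_⟩
  intro Q hQ Ep Em G mEp mEm mG dpm dpg dmg hunion hlt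
  obtain ⟨a, r, hr, rfl⟩ := hQ
  set Φ : (Fin d → ℝ) → (Fin d → ℝ) := fun x => a + r • x with hΦ
  obtain ⟨hli, hri⟩ := affineInv a hr
  have hΦcont : Continuous Φ := continuous_const.add (continuous_id.const_smul r)
  have hΦmeas : Measurable Φ := hΦcont.measurable
  have hΦsurj : Function.Surjective Φ := hri.surjective
  set c : ℝ≥0∞ := ENNReal.ofReal (r ^ d) with hc
  have hc0 : c ≠ 0 := (ENNReal.ofReal_pos.mpr (by positivity)).ne'
  have hctop : c ≠ ⊤ := ENNReal.ofReal_ne_top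
  have himg : ∀ S : Set (Fin d → ℝ), volume (Φ '' S) = c * volume S := by
    intro S
    rw [hc, hΦ]
    rw [volImageAffine a r S, abs_of_pos hr]
  have hpre : ∀ S : Set (Fin d → ℝ), volume S = c * volume (Φ ⁻¹' S) := by
    intro S
    conv_lhs => rw [← Set.image_preimage_eq S hΦsurj]
    exact himg _
  have hQ0pre : Φ ⁻¹' (Set.univ.pi fun i => Icc (a i) (a i + r))
      = Set.univ.pi fun _ : Fin d => Icc (0:ℝ) 1 := preimageAffineQ a hr
  have hunion' : (Set.univ.pi fun _ : Fin d => Icc (0:ℝ) 1)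
      = (Φ ⁻¹' Ep) ∪ (Φ ⁻¹' Em) ∪ (Φ ⁻¹' G) := by
    rw [← hQ0pre, hunion, Set.preimage_union, Set.preimage_union]
  have hlt' : ENNReal.ofReal τ * volume (Φ ⁻¹' G) <
      min (volume (Φ ⁻¹' Ep)) (volume (Φ ⁻¹' Em)) := by
    rw [lt_min_iff] at hlt ⊢
    constructor
    · have h1 := hlt.1
      rw [hpre G, hpre Ep,
        show ENNReal.ofReal τ * (c * volume (Φ ⁻¹' G))
          = c * (ENNReal.ofReal τ * volume (Φ ⁻¹' G)) by ring] at h1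
      exact (ENNReal.mul_lt_mul_iff_right hc0 hctop).mp h1
    · have h1 := hlt.2
      rw [hpre G, hpre Em,
        show ENNReal.ofReal τ * (c * volume (Φ ⁻¹' G))
          = c * (ENNReal.ofReal τ * volume (Φ ⁻¹' G)) by ring] at h1
      exact (ENNReal.mul_lt_mul_iff_right hc0 hctop).mp h1
  obtain ⟨W', hW'cube, hW'Q, hW'ineq⟩ := unitMain hd hτ hs hyp (Φ ⁻¹' Ep) (Φ ⁻¹' Em) (Φ ⁻¹' G)
    (mEp.preimage hΦmeas) (mEm.preimage hΦmeas) (dpm.preimage Φ) hunion' hlt'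
  obtain ⟨b, ρ, hρ, hW'eq⟩ := hW'cube
  have hWcube : IsCube (Φ '' W') := by
    refine ⟨(fun i => a i + r * b i), r * ρ, mul_pos hr hρ, ?_⟩
    rw [hW'eq, hΦ]
    exact imageAffineCube a hr b ρ
  refine ⟨Φ '' W', hWcube, ?_, ?_⟩
  · have h1 : Φ '' W' ⊆ Φ '' (Set.univ.pi fun _ : Fin d => Icc (0:ℝ) 1) :=
      Set.image_mono hW'Q
    rwa [← hQ0pre, Set.image_preimage_eq _ hΦsurj] at h1
  · have hWEp : Φ '' W' ∩ Ep = Φ '' (W' ∩ Φ ⁻¹' Ep) := (Set.image_inter_preimage Φ W' Ep).symm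
    have hWEm : Φ '' W' ∩ Em = Φ '' (W' ∩ Φ ⁻¹' Em) := (Set.image_inter_preimage Φ W' Em).symm
    rw [hWEp, hWEm, himg, himg, himg]
    apply le_min
    · calc ENNReal.ofReal s * (c * volume W') = c * (ENNReal.ofReal s * volume W') := by ring
        _ ≤ c * volume (W' ∩ Φ ⁻¹' Ep) :=
            mul_le_mul_right (hW'ineq.trans (min_le_left _ _)) c
    · calc ENNReal.ofReal s * (c * volume W') = c * (ENNReal.ofReal s * volume W') := by ring
        _ ≤ c * volume (W' ∩ Φ ⁻¹' Em) :=
            mul_le_mul_right (hW'ineq.trans (min_le_right _ _)) c
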